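/- With the general construction as above, for every k ∈ ℕ, dim A(k)/E(k) ≤ Σ_{j=0}^{k} dim V^<(k−j) · dim V^>(j), where dim V^<(0) = dim V^>(0) = 1. -/

import Mathlib

/-- The degree-`k` homogeneous component `A(k)` of the free `K`-algebra `A` on two
degree-one generators `x, y`. -/
noncomputable def Adeg (K : Type*) [Field K] (k : ℕ) : Submodule K (FreeAlgebra K (Fin 2)) :=
  (Submodule.span K (Set.range (FreeAlgebra.ι K))) ^ k

/-- `x` is a monomial of `A`, i.e. a product of generators. -/
def IsMonomial (K : Type*) [Field K] (x : FreeAlgebra K (Fin 2)) : Prop :=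
  ∃ l : List (Fin 2), x = (l.map (FreeAlgebra.ι K)).prod

/-- The exponents `p₁ < p₂ < … < p_t` of the binary expansion
`k = 2^{p₁} + … + 2^{p_t}`, in increasing order. -/
def bitsOf (k : ℕ) : List ℕ := (List.range k).filter (fun p => k.testBit p)

/-- `V^<(k) = V(2^{p₁}) ⋯ V(2^{p_t})` (increasing order); here `V m` plays the role
of `V(2^m)`.  For `k = 0` this is the unit submodule (dimension one). -/
noncomputable def Vlt (K : Type*) [Field K] (V : ℕ → Submodule K (FreeAlgebra K (Fin 2)))
    (k : ℕ) : Submodule K (FreeAlgebra K (Fin 2)) :=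
  ((bitsOf k).map V).prod

/-- `V^>(k) = V(2^{p_t}) ⋯ V(2^{p₁})` (decreasing order). -/
noncomputable def Vgt (K : Type*) [Field K] (V : ℕ → Submodule K (FreeAlgebra K (Fin 2)))
    (k : ℕ) : Submodule K (FreeAlgebra K (Fin 2)) :=
  (((bitsOf k).reverse).map V).prod

/-- `U^<(k) = Σ_i A(2^{p₁}+…+2^{p_{i-1}}) U(2^{p_i}) A(2^{p_{i+1}}+…+2^{p_t})`. -/
noncomputable def Ult (K : Type*) [Field K] (U : ℕ → Submodule K (FreeAlgebra K (Fin 2)))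
    (k : ℕ) : Submodule K (FreeAlgebra K (Fin 2)) :=
  ⨆ i : Fin (bitsOf k).length,
    Adeg K (((bitsOf k).take i.val).map (fun p => 2 ^ p)).sum * U ((bitsOf k).get i) *
      Adeg K (((bitsOf k).drop (i.val + 1)).map (fun p => 2 ^ p)).sum

/-- `U^>(k) = Σ_i A(2^{p_t}+…+2^{p_{i+1}}) U(2^{p_i}) A(2^{p_{i-1}}+…+2^{p₁})`,
i.e. the analogue of `U^<` for the reversed (decreasing) order of the powers. -/
noncomputable def Ugt (K : Type*) [Field K] (U : ℕ → Submodule K (FreeAlgebra K (Fin 2)))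
    (k : ℕ) : Submodule K (FreeAlgebra K (Fin 2)) :=
  ⨆ i : Fin (bitsOf k).reverse.length,
    Adeg K ((((bitsOf k).reverse.take i.val).map (fun p => 2 ^ p)).sum) *
      U ((bitsOf k).reverse.get i) *
      Adeg K ((((bitsOf k).reverse.drop (i.val + 1)).map (fun p => 2 ^ p)).sum)

/-- The homogeneous component `E(k)`: for `k ≥ 1` and `n` with `2^{n-1} ≤ k < 2^n`
(so `n = log₂ k + 1`), `E(k) = { r ∈ A(k) : A r A ∩ A(2^{n+1}) ⊆ U(2^n)A(2^n) + A(2^n)U(2^n) }`,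
expressed via `A(i) r A(j) ⊆ U(2^n)A(2^n) + A(2^n)U(2^n)` for all `i + k + j = 2^{n+1}`. -/
noncomputable def Edeg (K : Type*) [Field K] (U : ℕ → Submodule K (FreeAlgebra K (Fin 2)))
    (k : ℕ) : Submodule K (FreeAlgebra K (Fin 2)) :=
  Adeg K k ⊓ ⨅ (i : ℕ) (j : ℕ) (_ : i + k + j = 2 ^ (Nat.log 2 k + 2))
    (a : FreeAlgebra K (Fin 2)) (_ : a ∈ Adeg K i)
    (b : FreeAlgebra K (Fin 2)) (_ : b ∈ Adeg K j),
    Submodule.comap ((LinearMap.mulRight K b).comp (LinearMap.mulLeft K a))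
      (U (Nat.log 2 k + 1) * Adeg K (2 ^ (Nat.log 2 k + 1)) +
        Adeg K (2 ^ (Nat.log 2 k + 1)) * U (Nat.log 2 k + 1))

/-! ### Auxiliary lemmas -/

section Aux

variable {K : Type*} [Field K]

lemma Adeg_add (a b : ℕ) : Adeg K (a + b) = Adeg K a * Adeg K b := pow_add _ a b

lemma Adeg_zero : Adeg K 0 = 1 := pow_zero _

lemma filter_range_testBit (k : ℕ) : ∀ m, k ≤ m →
    (List.range m).filter (fun p => k.testBit p) = bitsOf k := by
  intro m hm
  induction m with
  | zero => have : k = 0 := by omega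
            subst this; rfl
  | succ m ih =>
    rcases Nat.eq_or_lt_of_le hm with h | h
    · rw [h]; rfl
    · have hkm : k ≤ m := by omega
      rw [List.range_succ, List.filter_append, ih hkm]
      have : k.testBit m = false := by
        by_contra hb
        have := Nat.ge_two_pow_of_testBit (x := k) (i := m) (by simpa using hb)
        have : m < 2 ^ m := Nat.lt_two_pow_self
        omega
      simp [this]

lemma sum_filter_range (n : ℕ) : ∀ k, k < 2 ^ n →
    (((List.range n).filter (fun p => k.testBit p)).map (fun p => 2 ^ p)).sum = k := by
  induction n with
  | zero => intro k hk; interval_cases k; simp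
  | succ n ih =>
    intro k hk
    rw [List.range_succ, List.filter_append]
    have h1 : (List.range n).filter (fun p => k.testBit p)
        = (List.range n).filter (fun p => (k % 2 ^ n).testBit p) := by
      apply List.filter_congr
      intro p hp
      simp only [List.mem_range] at hp
      simp [Nat.testBit_mod_two_pow, hp]
    have h2 := ih (k % 2 ^ n) (Nat.mod_lt _ (by positivity))
    have hdm := Nat.div_add_mod k (2 ^ n)
    have hdlt : k / 2 ^ n < 2 := by
      apply Nat.div_lt_of_lt_mul; rw [pow_succ] at hk; omega
    have htb : k.testBit n = decide (k / 2 ^ n % 2 = 1) := Nat.testBit_eq_decide_div_mod_eq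
    interval_cases h : k / 2 ^ n
    · have hfalse : k.testBit n = false := by simp [htb, h]
      simp only [List.map_append, List.sum_append, h1, h2]
      rw [List.filter_cons, List.filter_nil]
      simp [hfalse]
      omega
    · simp only [h] at htb
      norm_num at htb
      simp only [List.map_append, List.sum_append, h1, h2]
      rw [List.filter_cons, List.filter_nil]
      simp [htb]
      omega

lemma sum_bitsOf (k : ℕ) : ((bitsOf k).map (fun p => 2 ^ p)).sum = k := by
  rw [← filter_range_testBit k k (le_refl k)]
  exact sum_filter_range k k Nat.lt_two_pow_self

lemma bitsOf_sorted (k : ℕ) : (bitsOf k).Pairwise (· < ·) :=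
  (List.pairwise_lt_range (n := k)).sublist List.filter_sublist

lemma mem_bitsOf_le {k p : ℕ} (hp : p ∈ bitsOf k) : 2 ^ p ≤ k := by
  have : k.testBit p = true := by
    have := List.of_mem_filter hp
    simpa using this
  exact Nat.ge_two_pow_of_testBit this

lemma Adeg_sum (l : List ℕ) : Adeg K l.sum = (l.map (Adeg K)).prod := by
  induction l with
  | nil => simp [Adeg_zero]
  | cons a l ih => simp [Adeg_add, ih]

end Aux
section Abs
variable {K : Type*} [Field K]

lemma absorb (U : ℕ → Submodule K (FreeAlgebra K (Fin 2)))
    (habs : ∀ m, Adeg K (2 ^ m) * U m + U m * Adeg K (2 ^ m) ≤ U (m + 1)) :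
    ∀ d p s, 2 ^ p ∣ s → s + 2 ^ p ≤ 2 ^ (p + d) →
    Adeg K s * U p * Adeg K (2 ^ (p + d) - s - 2 ^ p) ≤ U (p + d) := by
  intro d
  induction d with
  | zero =>
    intro p s _ hle
    have h0 : (0:ℕ) < 2 ^ p := Nat.pow_pos (n := p) (by norm_num)
    have he : (2:ℕ) ^ (p + 0) = 2 ^ p := by norm_num
    have hs : s = 0 := by omega
    subst hs
    simp only [Nat.add_zero, Nat.sub_zero, Nat.sub_self, Adeg_zero, one_mul, mul_one]
    exact le_refl _
  | succ d ih =>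
    intro p s hdvd hle
    rw [show p + (d + 1) = p + d + 1 from by omega] at hle ⊢
    have hpow : (2:ℕ) ^ (p + 1) = 2 ^ p + 2 ^ p := by ring
    have hpow2 : (2:ℕ) ^ (p + d + 1) = 2 ^ (p + d) + 2 ^ (p + d) := by ring
    have h0 : (0:ℕ) < 2 ^ p := Nat.pow_pos (n := p) (by norm_num)
    have hUA1 : U p * Adeg K (2 ^ p) ≤ U (p + 1) :=
      le_trans (by rw [Submodule.add_eq_sup]; exact le_sup_right) (habs p)
    have hAU1 : Adeg K (2 ^ p) * U p ≤ U (p + 1) :=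
      le_trans (by rw [Submodule.add_eq_sup]; exact le_sup_left) (habs p)
    by_cases h2 : 2 ^ (p + 1) ∣ s
    · -- absorb the block of `A` directly to the right of the `U` block
      have hrd : 2 ^ (p + 1) ∣ 2 ^ (p + d + 1) - s :=
        Nat.dvd_sub (pow_dvd_pow 2 (by omega)) h2
      have hge : 2 ^ (p + 1) ≤ 2 ^ (p + d + 1) - s :=
        Nat.le_of_dvd (by omega) hrd
      have heq : 2 ^ (p + d + 1) - s - 2 ^ p
          = 2 ^ p + (2 ^ (p + d + 1) - s - 2 ^ (p + 1)) := by omega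
      rw [heq, Adeg_add, ← mul_assoc, mul_assoc (Adeg K s)]
      have step1 : Adeg K s * (U p * Adeg K (2 ^ p)) ≤ Adeg K s * U (p + 1) :=
        mul_le_mul' (le_refl _) hUA1
      refine le_trans (mul_le_mul' step1 (le_refl _)) ?_
      have := ih (p + 1) s h2 (by rw [show p + 1 + d = p + d + 1 from by omega]; omega)
      rw [show p + 1 + d = p + d + 1 from by omega] at this
      exact this
    · -- absorb the block of `A` directly to the left of the `U` block
      have hpos : s ≠ 0 := by rintro rfl; exact h2 (dvd_zero _)
      obtain ⟨c, hc⟩ := hdvd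
      obtain ⟨c', rfl⟩ : ∃ c', c = c' + 1 := by
        refine ⟨c - 1, ?_⟩
        have : c ≠ 0 := by rintro rfl; simp at hc; exact hpos hc
        omega
      have hceven : c' % 2 = 0 := by
        by_contra hco
        apply h2
        obtain ⟨e, he⟩ : ∃ e, c' + 1 = 2 * e := ⟨(c' + 1) / 2, by omega⟩
        exact ⟨e, by rw [hc, he, pow_succ]; ring⟩
      have hsge : 2 ^ p ≤ s := by
        rw [hc]; exact Nat.le_mul_of_pos_right _ (by omega)
      have h2' : 2 ^ (p + 1) ∣ s - 2 ^ p := by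
        have hs' : s - 2 ^ p = 2 ^ p * c' := by rw [hc, Nat.mul_succ]; omega
        obtain ⟨e, he⟩ : ∃ e, c' = 2 * e := ⟨c' / 2, by omega⟩
        exact ⟨e, by rw [hs', he, pow_succ]; ring⟩
      have heq : s = (s - 2 ^ p) + 2 ^ p := by omega
      rw [heq, Adeg_add, mul_assoc, mul_assoc]
      have step1 : Adeg K (2 ^ p) * (U p * Adeg K (2 ^ (p + d + 1) - (s - 2^p + 2^p) - 2 ^ p))
          ≤ U (p + 1) * Adeg K (2 ^ (p + d + 1) - (s - 2 ^ p) - 2 ^ (p + 1)) := by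
        rw [← mul_assoc]
        apply mul_le_mul' hAU1
        rw [show 2 ^ (p + d + 1) - (s - 2^p + 2^p) - 2 ^ p
            = 2 ^ (p + d + 1) - (s - 2 ^ p) - 2 ^ (p + 1) from by omega]
      refine le_trans (mul_le_mul' (le_refl (Adeg K (s - 2^p))) step1) ?_
      rw [← mul_assoc]
      have := ih (p + 1) (s - 2 ^ p) h2' (by rw [show p + 1 + d = p + d + 1 from by omega]; omega)
      rw [show p + 1 + d = p + d + 1 from by omega] at this
      exact this

lemma absorb' (U : ℕ → Submodule K (FreeAlgebra K (Fin 2)))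
    (habs : ∀ m, Adeg K (2 ^ m) * U m + U m * Adeg K (2 ^ m) ≤ U (m + 1))
    {n p s c : ℕ} (hpn : p ≤ n) (hdvd : 2 ^ p ∣ s) (heq : s + 2 ^ p + c = 2 ^ n) :
    Adeg K s * U p * Adeg K c ≤ U n := by
  obtain ⟨d, rfl⟩ : ∃ d, n = p + d := ⟨n - p, by omega⟩
  have := absorb U habs d p s hdvd (by omega)
  rw [show (2:ℕ) ^ (p + d) - s - 2 ^ p = c from by omega] at this
  exact this

end Abs
section Half
variable {K : Type*} [Field K]

lemma sum_split (l : List ℕ) (f : ℕ → ℕ) (i : ℕ) (h : i < l.length) :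
    (l.map f).sum = ((l.take i).map f).sum + (f l[i] + ((l.drop (i + 1)).map f).sum) := by
  conv_lhs => rw [← List.take_append_drop i l]
  rw [List.map_append, List.sum_append, List.drop_eq_getElem_cons h, List.map_cons, List.sum_cons]

lemma Ult_half (U : ℕ → Submodule K (FreeAlgebra K (Fin 2)))
    (habs : ∀ m, Adeg K (2 ^ m) * U m + U m * Adeg K (2 ^ m) ≤ U (m + 1))
    {q b n : ℕ} (hdvd : ∀ p ∈ bitsOf q, 2 ^ p ∣ b) (hqb : q ≤ b) (hbn : b ≤ 2 ^ n) :
    Adeg K (b - q) * Ult K U q * Adeg K (2 ^ n - b) ≤ U n := by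
  rw [Ult, Submodule.mul_iSup, Submodule.iSup_mul]
  apply iSup_le
  rintro ⟨i, hi⟩
  simp only [List.get_eq_getElem]
  have hmem : (bitsOf q)[i] ∈ bitsOf q := List.getElem_mem hi
  have hpq : 2 ^ (bitsOf q)[i] ≤ q := mem_bitsOf_le hmem
  have hsum := sum_bitsOf q
  have hsplit := sum_split (bitsOf q) (fun p => 2 ^ p) i hi
  set p := (bitsOf q)[i] with hp
  set pre := (((bitsOf q).take i).map (fun p => 2 ^ p)).sum with hpre
  set post := (((bitsOf q).drop (i + 1)).map (fun p => 2 ^ p)).sum with hpost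
  have hq : q = pre + (2 ^ p + post) := by rw [← hsum]; exact hsplit
  have hpostdvd : 2 ^ p ∣ 2 ^ p + post := by
    apply Dvd.dvd.add dvd_rfl
    apply List.dvd_sum
    intro x hx
    obtain ⟨p', hp', rfl⟩ := List.mem_map.mp hx
    apply pow_dvd_pow
    obtain ⟨m, hm, he⟩ := List.mem_iff_getElem.mp hp'
    have hm' : i + 1 + m < (bitsOf q).length := by simp at hm; omega
    rw [List.getElem_drop] at he
    have := List.pairwise_iff_getElem.mp (bitsOf_sorted q) i (i + 1 + m) hi hm' (by omega)
    rw [he] at this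
    omega
  have key : Adeg K (b - q) * (Adeg K pre * U p * Adeg K post) * Adeg K (2 ^ n - b)
      = Adeg K (b - q + pre) * U p * Adeg K (post + (2 ^ n - b)) := by
    rw [Adeg_add, Adeg_add]; simp only [mul_assoc]
  rw [key]
  apply absorb' U habs
  · exact (Nat.pow_le_pow_iff_right (by norm_num)).mp (le_trans (le_trans hpq hqb) hbn)
  · rw [show b - q + pre = b - (2 ^ p + post) from by omega]
    exact Nat.dvd_sub (hdvd p hmem) hpostdvd
  · omega

lemma Ugt_half (U : ℕ → Submodule K (FreeAlgebra K (Fin 2)))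
    (habs : ∀ m, Adeg K (2 ^ m) * U m + U m * Adeg K (2 ^ m) ≤ U (m + 1))
    {q b n : ℕ} (hdvd : ∀ p ∈ bitsOf q, 2 ^ p ∣ b) (hbq : b + q ≤ 2 ^ n) :
    Adeg K b * Ugt K U q * Adeg K (2 ^ n - b - q) ≤ U n := by
  rw [Ugt, Submodule.mul_iSup, Submodule.iSup_mul]
  apply iSup_le
  rintro ⟨i, hi⟩
  simp only [List.get_eq_getElem]
  have hmem : (bitsOf q).reverse[i] ∈ bitsOf q := by
    rw [← List.mem_reverse]; exact List.getElem_mem hi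
  have hpq : 2 ^ (bitsOf q).reverse[i] ≤ q := mem_bitsOf_le hmem
  have hsum : (((bitsOf q).reverse).map (fun p => 2 ^ p)).sum = q := by
    rw [List.map_reverse, List.sum_reverse]; exact sum_bitsOf q
  have hsplit := sum_split (bitsOf q).reverse (fun p => 2 ^ p) i hi
  set p := (bitsOf q).reverse[i] with hp
  set pre := (((bitsOf q).reverse.take i).map (fun p => 2 ^ p)).sum with hpre
  set post := (((bitsOf q).reverse.drop (i + 1)).map (fun p => 2 ^ p)).sum with hpost
  have hq : q = pre + (2 ^ p + post) := by rw [← hsum]; exact hsplit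
  have hrev : (bitsOf q).reverse.Pairwise (· > ·) := by
    rw [List.pairwise_reverse]; exact bitsOf_sorted q
  have hpredvd : 2 ^ p ∣ pre := by
    apply List.dvd_sum
    intro x hx
    obtain ⟨p', hp', rfl⟩ := List.mem_map.mp hx
    apply pow_dvd_pow
    obtain ⟨m, hm, he⟩ := List.mem_iff_getElem.mp hp'
    have hm' : m < (bitsOf q).reverse.length := by simp at hm ⊢; omega
    have hmi : m < i := by simp at hm; omega
    rw [List.getElem_take] at he
    have := List.pairwise_iff_getElem.mp hrev m i hm' hi hmi
    rw [he] at this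
    omega
  have key : Adeg K b * (Adeg K pre * U p * Adeg K post) * Adeg K (2 ^ n - b - q)
      = Adeg K (b + pre) * U p * Adeg K (post + (2 ^ n - b - q)) := by
    rw [Adeg_add, Adeg_add]; simp only [mul_assoc]
  rw [key]
  apply absorb' U habs
  · exact (Nat.pow_le_pow_iff_right (by norm_num)).mp (le_trans hpq (by omega))
  · exact Dvd.dvd.add (hdvd p hmem) hpredvd
  · omega

end Half
section Decomp
variable {K : Type*} [Field K]

lemma prod_Adeg_pow (l : List ℕ) :
    (l.map (fun p => Adeg K (2 ^ p))).prod = Adeg K ((l.map (fun p => 2 ^ p)).sum) := by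
  rw [Adeg_sum, List.map_map]
  rfl

lemma prod_le_Adeg (W : ℕ → Submodule K (FreeAlgebra K (Fin 2)))
    (hW : ∀ m, W m ≤ Adeg K (2 ^ m)) (l : List ℕ) :
    (l.map W).prod ≤ Adeg K ((l.map (fun p => 2 ^ p)).sum) := by
  rw [← prod_Adeg_pow]
  induction l with
  | nil => simp
  | cons a l ih =>
    simp only [List.map_cons, List.prod_cons]
    exact mul_le_mul' (hW a) ih

lemma decomp_list (U V : ℕ → Submodule K (FreeAlgebra K (Fin 2)))
    (hVA : ∀ m, V m ≤ Adeg K (2 ^ m))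
    (hsum : ∀ m, V m ⊔ U m = Adeg K (2 ^ m)) :
    ∀ l : List ℕ, (l.map (fun p => Adeg K (2 ^ p))).prod ≤ (l.map V).prod ⊔
      ⨆ i : Fin l.length,
        Adeg K ((l.take i.val).map (fun p => 2 ^ p)).sum * U (l.get i) *
          Adeg K ((l.drop (i.val + 1)).map (fun p => 2 ^ p)).sum := by
  intro l
  induction l with
  | nil => simp
  | cons a l ih =>
    simp only [List.map_cons, List.prod_cons]
    rw [← hsum a, Submodule.sup_mul]
    apply sup_le
    · -- V a * rest
      refine le_trans (mul_le_mul' (le_refl (V a)) ih) ?_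
      rw [Submodule.mul_sup]
      apply sup_le
      · exact le_sup_left
      · rw [Submodule.mul_iSup]
        apply iSup_le
        rintro ⟨i, hi⟩
        apply le_sup_of_le_right
        have hterm : V a *
            (Adeg K ((l.take i).map (fun p => 2 ^ p)).sum * U (l.get ⟨i, hi⟩) *
              Adeg K ((l.drop (i + 1)).map (fun p => 2 ^ p)).sum)
            ≤ Adeg K (((a :: l).take (i + 1)).map (fun p => 2 ^ p)).sum *
                U ((a :: l).get ⟨i + 1, by simpa using hi⟩) *
              Adeg K (((a :: l).drop (i + 1 + 1)).map (fun p => 2 ^ p)).sum := by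
          rw [List.take_succ_cons, List.drop_succ_cons, List.get_cons_succ,
            List.map_cons, List.sum_cons, Adeg_add]
          rw [← mul_assoc, ← mul_assoc]
          exact mul_le_mul' (mul_le_mul'
            (mul_le_mul' (hVA a) (le_refl _)) (le_refl _)) (le_refl _)
        refine le_trans hterm
          (le_iSup (fun j : Fin (a :: l).length =>
            Adeg K (((a :: l).take j.val).map (fun p => 2 ^ p)).sum * U ((a :: l).get j) *
              Adeg K (((a :: l).drop (j.val + 1)).map (fun p => 2 ^ p)).sum)
            (⟨i + 1, by simpa using hi⟩ : Fin (a :: l).length))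
    · -- U a * rest
      apply le_sup_of_le_right
      have hterm : U a * (l.map (fun p => Adeg K (2 ^ p))).prod
          ≤ Adeg K (((a :: l).take 0).map (fun p => 2 ^ p)).sum *
              U ((a :: l).get ⟨0, by simp⟩) *
            Adeg K (((a :: l).drop 1).map (fun p => 2 ^ p)).sum := by
        simp only [List.take_zero, List.map_nil, List.sum_nil, Adeg_zero, one_mul,
          List.get_cons_zero, List.drop_succ_cons, List.drop_zero]
        exact mul_le_mul' (le_refl _) (le_of_eq (prod_Adeg_pow l))
      refine le_trans hterm
        (le_iSup (fun j : Fin (a :: l).length =>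
          Adeg K (((a :: l).take j.val).map (fun p => 2 ^ p)).sum * U ((a :: l).get j) *
            Adeg K (((a :: l).drop (j.val + 1)).map (fun p => 2 ^ p)).sum)
          (⟨0, by simp⟩ : Fin (a :: l).length))

lemma Vlt_le_Adeg (V : ℕ → Submodule K (FreeAlgebra K (Fin 2)))
    (hVA : ∀ m, V m ≤ Adeg K (2 ^ m)) (q : ℕ) : Vlt K V q ≤ Adeg K q := by
  have := prod_le_Adeg V hVA (bitsOf q)
  rwa [sum_bitsOf] at this

lemma Vgt_le_Adeg (V : ℕ → Submodule K (FreeAlgebra K (Fin 2)))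
    (hVA : ∀ m, V m ≤ Adeg K (2 ^ m)) (q : ℕ) : Vgt K V q ≤ Adeg K q := by
  have h := prod_le_Adeg V hVA (bitsOf q).reverse
  have h2 : ((bitsOf q).reverse.map (fun p => 2 ^ p)).sum = q := by
    rw [List.map_reverse, List.sum_reverse, sum_bitsOf]
  rw [h2] at h
  exact h

lemma Ult_le_Adeg (U : ℕ → Submodule K (FreeAlgebra K (Fin 2)))
    (hUA : ∀ m, U m ≤ Adeg K (2 ^ m)) (q : ℕ) : Ult K U q ≤ Adeg K q := by
  rw [Ult]
  apply iSup_le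
  rintro ⟨i, hi⟩
  simp only [List.get_eq_getElem]
  have hsplit := sum_split (bitsOf q) (fun p => 2 ^ p) i hi
  rw [sum_bitsOf] at hsplit
  calc Adeg K (((bitsOf q).take i).map (fun p => 2 ^ p)).sum * U (bitsOf q)[i] *
        Adeg K (((bitsOf q).drop (i + 1)).map (fun p => 2 ^ p)).sum
      ≤ Adeg K (((bitsOf q).take i).map (fun p => 2 ^ p)).sum * Adeg K (2 ^ (bitsOf q)[i]) *
        Adeg K (((bitsOf q).drop (i + 1)).map (fun p => 2 ^ p)).sum :=
        mul_le_mul' (mul_le_mul' (le_refl _) (hUA _)) (le_refl _)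
    _ = Adeg K q := by rw [← Adeg_add, ← Adeg_add]; congr 1; omega

lemma Ugt_le_Adeg (U : ℕ → Submodule K (FreeAlgebra K (Fin 2)))
    (hUA : ∀ m, U m ≤ Adeg K (2 ^ m)) (q : ℕ) : Ugt K U q ≤ Adeg K q := by
  rw [Ugt]
  apply iSup_le
  rintro ⟨i, hi⟩
  simp only [List.get_eq_getElem]
  have hsum : ((bitsOf q).reverse.map (fun p => 2 ^ p)).sum = q := by
    rw [List.map_reverse, List.sum_reverse, sum_bitsOf]
  have hsplit := sum_split (bitsOf q).reverse (fun p => 2 ^ p) i hi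
  rw [hsum] at hsplit
  calc Adeg K (((bitsOf q).reverse.take i).map (fun p => 2 ^ p)).sum * U (bitsOf q).reverse[i] *
        Adeg K (((bitsOf q).reverse.drop (i + 1)).map (fun p => 2 ^ p)).sum
      ≤ Adeg K (((bitsOf q).reverse.take i).map (fun p => 2 ^ p)).sum *
          Adeg K (2 ^ (bitsOf q).reverse[i]) *
        Adeg K (((bitsOf q).reverse.drop (i + 1)).map (fun p => 2 ^ p)).sum :=
        mul_le_mul' (mul_le_mul' (le_refl _) (hUA _)) (le_refl _)
    _ = Adeg K q := by rw [← Adeg_add, ← Adeg_add]; congr 1; omega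

lemma Adeg_decomp_lt (U V : ℕ → Submodule K (FreeAlgebra K (Fin 2)))
    (hVA : ∀ m, V m ≤ Adeg K (2 ^ m)) (hsum : ∀ m, V m ⊔ U m = Adeg K (2 ^ m)) (q : ℕ) :
    Adeg K q ≤ Vlt K V q ⊔ Ult K U q := by
  have h := decomp_list U V hVA hsum (bitsOf q)
  rw [prod_Adeg_pow, sum_bitsOf] at h
  exact h

lemma Adeg_decomp_gt (U V : ℕ → Submodule K (FreeAlgebra K (Fin 2)))
    (hVA : ∀ m, V m ≤ Adeg K (2 ^ m)) (hsum : ∀ m, V m ⊔ U m = Adeg K (2 ^ m)) (q : ℕ) :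
    Adeg K q ≤ Vgt K V q ⊔ Ugt K U q := by
  have h := decomp_list U V hVA hsum (bitsOf q).reverse
  have h2 : ((bitsOf q).reverse.map (fun p => 2 ^ p)).sum = q := by
    rw [List.map_reverse, List.sum_reverse, sum_bitsOf]
  rw [prod_Adeg_pow, h2] at h
  exact h

end Decomp
section Key
variable {K : Type*} [Field K]

lemma key (U : ℕ → Submodule K (FreeAlgebra K (Fin 2)))
    (habs : ∀ m, Adeg K (2 ^ m) * U m + U m * Adeg K (2 ^ m) ≤ U (m + 1))
    {k m i j : ℕ} (hk1 : 2 ^ m ≤ k) (hk2 : k < 2 ^ (m + 1))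
    (hij : i + k + j = 2 ^ (m + 2)) :
    ∃ q ≤ k,
      Adeg K i * (Ult K U q * Adeg K (k - q)) * Adeg K j ≤
        U (m + 1) * Adeg K (2 ^ (m + 1)) ⊔ Adeg K (2 ^ (m + 1)) * U (m + 1) ∧
      Adeg K i * (Adeg K q * Ugt K U (k - q)) * Adeg K j ≤
        U (m + 1) * Adeg K (2 ^ (m + 1)) ⊔ Adeg K (2 ^ (m + 1)) * U (m + 1) := by
  have hh : (0:ℕ) < 2 ^ m := Nat.pow_pos (n := m) (by norm_num)
  have hp1 : (2:ℕ) ^ (m + 1) = 2 ^ m + 2 ^ m := by ring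
  have hp2 : (2:ℕ) ^ (m + 2) = 2 ^ (m + 1) + 2 ^ (m + 1) := by ring
  have hdvdgen : ∀ q' t : ℕ, q' ≤ 2 ^ t → ∀ p ∈ bitsOf q', 2 ^ p ∣ 2 ^ t := by
    intro q' t hq' p hp
    apply pow_dvd_pow
    exact (Nat.pow_le_pow_iff_right (by norm_num)).mp (le_trans (mem_bitsOf_le hp) hq')
  by_cases hA : i ≤ 2 ^ (m + 1) ∧ 2 ^ (m + 1) ≤ i + k
  · -- the degree-`k` block straddles the midpoint
    obtain ⟨hA1, hA2⟩ := hA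
    refine ⟨2 ^ (m + 1) - i, by omega, ?_, ?_⟩
    · have hU := Ult_half U habs (q := 2 ^ (m + 1) - i) (b := 2 ^ (m + 1)) (n := m + 1)
        (hdvdgen _ (m + 1) (by omega)) (by omega) (le_refl _)
      rw [show 2 ^ (m + 1) - (2 ^ (m + 1) - i) = i from by omega, Nat.sub_self,
        Adeg_zero, mul_one] at hU
      have e : Adeg K i * (Ult K U (2 ^ (m + 1) - i) * Adeg K (k - (2 ^ (m + 1) - i))) * Adeg K j
          = (Adeg K i * Ult K U (2 ^ (m + 1) - i)) *
            (Adeg K (k - (2 ^ (m + 1) - i)) * Adeg K j) := by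
        simp only [mul_assoc]
      have e2 : Adeg K (k - (2 ^ (m + 1) - i)) * Adeg K j = Adeg K (2 ^ (m + 1)) := by
        rw [← Adeg_add]; congr 1; omega
      rw [e, e2]
      exact le_sup_of_le_left (mul_le_mul' hU (le_refl _))
    · have hU := Ugt_half U habs (q := k - (2 ^ (m + 1) - i)) (b := 0) (n := m + 1)
        (fun p _ => dvd_zero _) (by omega)
      rw [Adeg_zero, one_mul, show 2 ^ (m + 1) - 0 - (k - (2 ^ (m + 1) - i)) = j from by omega]
        at hU
      have e : Adeg K i * (Adeg K (2 ^ (m + 1) - i) * Ugt K U (k - (2 ^ (m + 1) - i))) * Adeg K j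
          = (Adeg K i * Adeg K (2 ^ (m + 1) - i)) *
            (Ugt K U (k - (2 ^ (m + 1) - i)) * Adeg K j) := by
        simp only [mul_assoc]
      have e2 : Adeg K i * Adeg K (2 ^ (m + 1) - i) = Adeg K (2 ^ (m + 1)) := by
        rw [← Adeg_add]; congr 1; omega
      rw [e, e2]
      exact le_sup_of_le_right (mul_le_mul' (le_refl _) hU)
  · by_cases hB : i + k < 2 ^ (m + 1)
    · -- the block lies in the left half; split at `2^m`
      have hiB : i < 2 ^ m := by omega
      refine ⟨2 ^ m - i, by omega, ?_, ?_⟩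
      · have hU := Ult_half U habs (q := 2 ^ m - i) (b := 2 ^ m) (n := m + 1)
          (hdvdgen _ m (by omega)) (by omega) (by omega)
        have hU' : Adeg K i * (Ult K U (2 ^ m - i) *
            (Adeg K (k - (2 ^ m - i)) * Adeg K (2 ^ (m + 1) - i - k))) ≤ U (m + 1) := by
          refine le_trans (le_of_eq ?_) hU
          rw [show (2:ℕ) ^ m - (2 ^ m - i) = i from by omega,
            show (2:ℕ) ^ (m + 1) - 2 ^ m
              = (k - (2 ^ m - i)) + (2 ^ (m + 1) - i - k) from by omega, Adeg_add]
          simp only [mul_assoc]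
        have e : Adeg K i * (Ult K U (2 ^ m - i) * Adeg K (k - (2 ^ m - i))) * Adeg K j
            = Adeg K i * (Ult K U (2 ^ m - i) *
                (Adeg K (k - (2 ^ m - i)) * Adeg K (2 ^ (m + 1) - i - k))) *
              Adeg K (2 ^ (m + 1)) := by
          rw [show j = (2 ^ (m + 1) - i - k) + 2 ^ (m + 1) from by omega, Adeg_add]
          simp only [mul_assoc]
        rw [e]
        exact le_sup_of_le_left (mul_le_mul' hU' (le_refl _))
      · have hU := Ugt_half U habs (q := k - (2 ^ m - i)) (b := 2 ^ m) (n := m + 1)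
          (hdvdgen _ m (by omega)) (by omega)
        have hU' : (Adeg K i * Adeg K (2 ^ m - i)) *
            (Ugt K U (k - (2 ^ m - i)) * Adeg K (2 ^ (m + 1) - i - k)) ≤ U (m + 1) := by
          refine le_trans (le_of_eq ?_) hU
          have e0 : Adeg K i * Adeg K (2 ^ m - i) = Adeg K (2 ^ m) := by
            rw [← Adeg_add]; congr 1; omega
          have e1 : Adeg K (2 ^ (m + 1) - i - k)
              = Adeg K (2 ^ (m + 1) - 2 ^ m - (k - (2 ^ m - i))) := by congr 1; omega
          rw [e0, e1]
          simp only [mul_assoc]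
        have e : Adeg K i * (Adeg K (2 ^ m - i) * Ugt K U (k - (2 ^ m - i))) * Adeg K j
            = (Adeg K i * Adeg K (2 ^ m - i)) *
                (Ugt K U (k - (2 ^ m - i)) * Adeg K (2 ^ (m + 1) - i - k)) *
              Adeg K (2 ^ (m + 1)) := by
          rw [show j = (2 ^ (m + 1) - i - k) + 2 ^ (m + 1) from by omega, Adeg_add]
          simp only [mul_assoc]
        rw [e]
        exact le_sup_of_le_left (mul_le_mul' hU' (le_refl _))
    · -- the block lies in the right half; split at `3·2^m`
      have hiC : 2 ^ (m + 1) < i := by omega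
      have hiC2 : i + k ≤ 2 ^ (m + 2) := by omega
      refine ⟨3 * 2 ^ m - i, by omega, ?_, ?_⟩
      · have hU := Ult_half U habs (q := 3 * 2 ^ m - i) (b := 2 ^ m) (n := m + 1)
          (hdvdgen _ m (by omega)) (by omega) (by omega)
        have hU' : Adeg K (i - 2 ^ (m + 1)) * (Ult K U (3 * 2 ^ m - i) *
            (Adeg K (k - (3 * 2 ^ m - i)) * Adeg K j)) ≤ U (m + 1) := by
          refine le_trans (le_of_eq ?_) hU
          rw [show (2:ℕ) ^ m - (3 * 2 ^ m - i) = i - 2 ^ (m + 1) from by omega,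
            show (2:ℕ) ^ (m + 1) - 2 ^ m
              = (k - (3 * 2 ^ m - i)) + j from by omega, Adeg_add]
          simp only [mul_assoc]
        have e : Adeg K i * (Ult K U (3 * 2 ^ m - i) * Adeg K (k - (3 * 2 ^ m - i))) * Adeg K j
            = Adeg K (2 ^ (m + 1)) *
              (Adeg K (i - 2 ^ (m + 1)) * (Ult K U (3 * 2 ^ m - i) *
                (Adeg K (k - (3 * 2 ^ m - i)) * Adeg K j))) := by
          rw [show i = 2 ^ (m + 1) + (i - 2 ^ (m + 1)) from by omega, Adeg_add,
            show 2 ^ (m + 1) + (i - 2 ^ (m + 1)) - 2 ^ (m + 1) = i - 2 ^ (m + 1) from by omega]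
          simp only [mul_assoc]
        rw [e]
        exact le_sup_of_le_right (mul_le_mul' (le_refl _) hU')
      · have hU := Ugt_half U habs (q := k - (3 * 2 ^ m - i)) (b := 2 ^ m) (n := m + 1)
          (hdvdgen _ m (by omega)) (by omega)
        have hU' : (Adeg K (i - 2 ^ (m + 1)) * Adeg K (3 * 2 ^ m - i)) *
            (Ugt K U (k - (3 * 2 ^ m - i)) * Adeg K j) ≤ U (m + 1) := by
          refine le_trans (le_of_eq ?_) hU
          have e0 : Adeg K (i - 2 ^ (m + 1)) * Adeg K (3 * 2 ^ m - i) = Adeg K (2 ^ m) := by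
            rw [← Adeg_add]; congr 1; omega
          have e1 : Adeg K j
              = Adeg K (2 ^ (m + 1) - 2 ^ m - (k - (3 * 2 ^ m - i))) := by congr 1; omega
          rw [e0, e1]
          simp only [mul_assoc]
        have e : Adeg K i * (Adeg K (3 * 2 ^ m - i) * Ugt K U (k - (3 * 2 ^ m - i))) * Adeg K j
            = Adeg K (2 ^ (m + 1)) *
              ((Adeg K (i - 2 ^ (m + 1)) * Adeg K (3 * 2 ^ m - i)) *
                (Ugt K U (k - (3 * 2 ^ m - i)) * Adeg K j)) := by
          rw [show i = 2 ^ (m + 1) + (i - 2 ^ (m + 1)) from by omega, Adeg_add,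
            show 2 ^ (m + 1) + (i - 2 ^ (m + 1)) - 2 ^ (m + 1) = i - 2 ^ (m + 1) from by omega]
          simp only [mul_assoc]
        rw [e]
        exact le_sup_of_le_right (mul_le_mul' (le_refl _) hU')

end Key
section Dim
variable {K : Type*} [Field K]

open Module Pointwise

lemma Adeg_fd (k : ℕ) : FiniteDimensional K ↥(Adeg K k) :=
  Module.Finite.iff_fg.mpr (Submodule.FG.pow (Submodule.fg_span (Set.finite_range _)) k)

lemma fd_of_le_Adeg {k : ℕ} {P : Submodule K (FreeAlgebra K (Fin 2))} (h : P ≤ Adeg K k) :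
    FiniteDimensional K ↥P := by
  have := Adeg_fd (K := K) k
  exact Submodule.finiteDimensional_of_le h

lemma finrank_mul_le (P Q : Submodule K (FreeAlgebra K (Fin 2)))
    [FiniteDimensional K P] [FiniteDimensional K Q] :
    finrank K ↥(P * Q) ≤ finrank K ↥P * finrank K ↥Q := by
  classical
  let bP := Module.finBasis K ↥P
  let bQ := Module.finBasis K ↥Q
  let sP : Finset (FreeAlgebra K (Fin 2)) :=
    Finset.image (fun i => ((bP i : ↥P) : FreeAlgebra K (Fin 2))) Finset.univ
  let sQ : Finset (FreeAlgebra K (Fin 2)) :=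
    Finset.image (fun i => ((bQ i : ↥Q) : FreeAlgebra K (Fin 2))) Finset.univ
  have hP : P = Submodule.span K (sP : Set (FreeAlgebra K (Fin 2))) := by
    conv_lhs => rw [← Submodule.map_subtype_top P, ← bP.span_eq]
    rw [Submodule.map_span]
    congr 1
    ext x; simp [sP]
  have hQ : Q = Submodule.span K (sQ : Set (FreeAlgebra K (Fin 2))) := by
    conv_lhs => rw [← Submodule.map_subtype_top Q, ← bQ.span_eq]
    rw [Submodule.map_span]
    congr 1
    ext x; simp [sQ]
  have hPQ : P * Q = Submodule.span K ((sP * sQ : Finset (FreeAlgebra K (Fin 2))) :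
      Set (FreeAlgebra K (Fin 2))) := by
    rw [Finset.coe_mul, ← Submodule.span_mul_span, ← hP, ← hQ]
  calc finrank K ↥(P * Q) ≤ (sP * sQ).card := by
        rw [hPQ]; exact finrank_span_finset_le_card _
    _ ≤ sP.card * sQ.card := Finset.card_mul_le
    _ ≤ finrank K ↥P * finrank K ↥Q := by
        apply Nat.mul_le_mul <;> exact le_trans Finset.card_image_le (by simp)

variable {X : Type*} [AddCommGroup X] [Module K X] [FiniteDimensional K X]

lemma finrank_quot_inf_le (p q : Submodule K X) :
    finrank K (X ⧸ (p ⊓ q)) ≤ finrank K (X ⧸ p) + finrank K (X ⧸ q) := by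
  have e1 := Submodule.finrank_quotient_add_finrank (p ⊓ q)
  have e2 := Submodule.finrank_quotient_add_finrank p
  have e3 := Submodule.finrank_quotient_add_finrank q
  have e4 := Submodule.finrank_sup_add_finrank_inf_eq p q
  have e5 : finrank K ↥(p ⊔ q) ≤ finrank K X := Submodule.finrank_le _
  omega

lemma finrank_quot_mono {p q : Submodule K X} (h : p ≤ q) :
    finrank K (X ⧸ q) ≤ finrank K (X ⧸ p) := by
  have e1 := Submodule.finrank_quotient_add_finrank p
  have e2 := Submodule.finrank_quotient_add_finrank q
  have e3 : finrank K ↥p ≤ finrank K ↥q := Submodule.finrank_mono h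
  omega

lemma finrank_quot_top : finrank K (X ⧸ (⊤ : Submodule K X)) = 0 := by
  have e1 := Submodule.finrank_quotient_add_finrank (⊤ : Submodule K X)
  have e2 : finrank K ↥(⊤ : Submodule K X) = finrank K X := finrank_top K X
  omega

lemma finrank_quot_sup_top {p w : Submodule K X} (h : p ⊔ w = ⊤) :
    finrank K (X ⧸ p) ≤ finrank K ↥w := by
  have e1 := Submodule.finrank_quotient_add_finrank p
  have e4 := Submodule.finrank_sup_add_finrank_inf_eq p w
  rw [h] at e4
  have e2 : finrank K ↥(⊤ : Submodule K X) = finrank K X := finrank_top K X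
  omega

lemma finrank_quot_iInf_le (s : Finset ℕ) (P : ℕ → Submodule K X) :
    finrank K (X ⧸ (⨅ q ∈ s, P q)) ≤ ∑ q ∈ s, finrank K (X ⧸ P q) := by
  classical
  induction s using Finset.induction with
  | empty =>
    rw [show (⨅ q ∈ (∅ : Finset ℕ), P q) = ⊤ from by simp]
    simp [finrank_quot_top]
  | insert _ _ hnot ih =>
    rename_i a s
    rw [Finset.sum_insert hnot]
    rw [show (⨅ q ∈ insert a s, P q) = P a ⊓ ⨅ q ∈ s, P q from by
      rw [Finset.iInf_insert]]
    refine le_trans (finrank_quot_inf_le (P a) (⨅ q ∈ s, P q)) (by omega)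
end Dim
section Final
variable {K : Type*} [Field K]

open Module

lemma finrank_quot_le {X : Type*} [AddCommGroup X] [Module K X] [FiniteDimensional K X]
    (p : Submodule K X) : finrank K (X ⧸ p) ≤ finrank K X := by
  have := Submodule.finrank_quotient_add_finrank p
  omega

theorem stmt7' {K : Type*} [Field K]
    (U V : ℕ → Submodule K (FreeAlgebra K (Fin 2)))
    (hUA : ∀ m, U m ≤ Adeg K (2 ^ m)) (hVA : ∀ m, V m ≤ Adeg K (2 ^ m))
    (hsum : ∀ m, V m ⊔ U m = Adeg K (2 ^ m))
    (habs : ∀ m, Adeg K (2 ^ m) * U m + U m * Adeg K (2 ^ m) ≤ U (m + 1)) :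
    ∀ k : ℕ,
      Module.finrank K
          (↥(Adeg K k) ⧸ Submodule.comap (Adeg K k).subtype (Edeg K U k)) ≤
        ∑ j ∈ Finset.range (k + 1),
          Module.finrank K ↥(Vlt K V (k - j)) * Module.finrank K ↥(Vgt K V j) := by
  intro k
  haveI : FiniteDimensional K ↥(Adeg K k) := Adeg_fd k
  rcases Nat.eq_zero_or_pos k with rfl | hkpos
  · -- k = 0
    have h1 : finrank K ↥(1 : Submodule K (FreeAlgebra K (Fin 2))) = 1 := by
      rw [Submodule.one_eq_span]
      exact finrank_span_singleton one_ne_zero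
    have hV0 : Vlt K V 0 = 1 := by
      simp [Vlt, bitsOf]
    have hG0 : Vgt K V 0 = 1 := by
      simp [Vgt, bitsOf]
    rw [Finset.sum_range_one, Nat.sub_zero, hV0, hG0, h1]
    calc finrank K (↥(Adeg K 0) ⧸ Submodule.comap (Adeg K 0).subtype (Edeg K U 0))
        ≤ finrank K ↥(Adeg K 0) := finrank_quot_le _
      _ = 1 * 1 := by rw [Adeg_zero, h1]
  · -- k ≥ 1
    have hk1 : 2 ^ Nat.log 2 k ≤ k := Nat.pow_log_le_self 2 (by omega)
    have hk2 : k < 2 ^ (Nat.log 2 k + 1) := Nat.lt_pow_succ_log_self (by norm_num) k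
    set N : ℕ → Submodule K (FreeAlgebra K (Fin 2)) :=
      fun q => Ult K U q * Adeg K (k - q) ⊔ Adeg K q * Ugt K U (k - q) with hN
    have hNle : ∀ q, q ≤ k → N q ≤ Adeg K k := by
      intro q hq
      apply sup_le
      · refine le_trans (mul_le_mul' (Ult_le_Adeg U hUA q) (le_refl _)) ?_
        exact le_of_eq (by rw [← Adeg_add]; congr 1; omega)
      · refine le_trans (mul_le_mul' (le_refl _) (Ugt_le_Adeg U hUA (k - q))) ?_
        exact le_of_eq (by rw [← Adeg_add]; congr 1; omega)
    have hW : ∀ q, q ≤ k → Vlt K V q * Vgt K V (k - q) ≤ Adeg K k := by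
      intro q hq
      refine le_trans (mul_le_mul' (Vlt_le_Adeg V hVA q) (Vgt_le_Adeg V hVA (k - q))) ?_
      exact le_of_eq (by rw [← Adeg_add]; congr 1; omega)
    have hdecomp : ∀ q, q ≤ k → Adeg K k ≤ Vlt K V q * Vgt K V (k - q) ⊔ N q := by
      intro q hq
      have hk' : Adeg K k = Adeg K q * Adeg K (k - q) := by
        rw [← Adeg_add]; congr 1; omega
      rw [hk']
      refine le_trans (mul_le_mul' (Adeg_decomp_lt U V hVA hsum q)
        (Adeg_decomp_gt U V hVA hsum (k - q))) ?_
      rw [Submodule.sup_mul, Submodule.mul_sup, Submodule.mul_sup]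
      apply sup_le
      · apply sup_le
        · exact le_sup_left
        · exact le_sup_of_le_right (le_sup_of_le_right
            (mul_le_mul' (Vlt_le_Adeg V hVA q) (le_refl _)))
      · apply sup_le
        · exact le_sup_of_le_right (le_sup_of_le_left
            (mul_le_mul' (le_refl _) (Vgt_le_Adeg V hVA (k - q))))
        · exact le_sup_of_le_right (le_sup_of_le_left
            (mul_le_mul' (le_refl _) (Ugt_le_Adeg U hUA (k - q))))
    -- E-containment
    have hE : (Adeg K k ⊓ ⨅ q ∈ Finset.range (k + 1), N q) ≤ Edeg K U k := by
      rw [Edeg]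
      refine le_inf inf_le_left ?_
      refine le_iInf fun i => le_iInf fun j => le_iInf fun hij => le_iInf fun a =>
        le_iInf fun ha => le_iInf fun b => le_iInf fun hb => ?_
      obtain ⟨q, hq, h1, h2⟩ := key U habs (k := k) (m := Nat.log 2 k) hk1 hk2 hij
      intro r hr
      have hrN : r ∈ N q := by
        have h' := (Submodule.mem_iInf _).mp hr.2 q
        exact (Submodule.mem_iInf _).mp h' (by simp [Finset.mem_range]; omega)
      rw [Submodule.mem_comap]
      simp only [LinearMap.comp_apply, LinearMap.mulLeft_apply, LinearMap.mulRight_apply]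
      have hmem : a * r * b ∈ Adeg K i * N q * Adeg K j :=
        Submodule.mul_mem_mul (Submodule.mul_mem_mul ha hrN) hb
      have hle : Adeg K i * N q * Adeg K j ≤
          U (Nat.log 2 k + 1) * Adeg K (2 ^ (Nat.log 2 k + 1)) ⊔
            Adeg K (2 ^ (Nat.log 2 k + 1)) * U (Nat.log 2 k + 1) := by
        rw [hN]
        rw [Submodule.mul_sup, Submodule.sup_mul]
        exact sup_le h1 h2
      rw [Submodule.add_eq_sup]
      exact hle hmem
    -- dimension counting
    have hstep1 : finrank K (↥(Adeg K k) ⧸ Submodule.comap (Adeg K k).subtype (Edeg K U k))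
        ≤ finrank K (↥(Adeg K k) ⧸
            ⨅ q ∈ Finset.range (k + 1), Submodule.comap (Adeg K k).subtype (N q)) := by
      apply finrank_quot_mono
      refine le_trans ?_ (Submodule.comap_mono hE)
      intro x hx
      rw [Submodule.mem_comap, Submodule.mem_inf]
      refine ⟨x.2, ?_⟩
      rw [Submodule.mem_iInf]
      intro q
      rw [Submodule.mem_iInf]
      intro hq
      have h' := (Submodule.mem_iInf _).mp hx q
      have h'' := (Submodule.mem_iInf _).mp h' hq
      rwa [Submodule.mem_comap] at h''
    have hstep2 := finrank_quot_iInf_le (X := ↥(Adeg K k)) (Finset.range (k + 1))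
      (fun q => Submodule.comap (Adeg K k).subtype (N q))
    have hstep3 : ∀ q ∈ Finset.range (k + 1),
        finrank K (↥(Adeg K k) ⧸ Submodule.comap (Adeg K k).subtype (N q)) ≤
          finrank K ↥(Vlt K V q) * finrank K ↥(Vgt K V (k - q)) := by
      intro q hq'
      have hq : q ≤ k := by
        rw [Finset.mem_range] at hq'; omega
      have hWq := hW q hq
      have htop : Submodule.comap (Adeg K k).subtype (Vlt K V q * Vgt K V (k - q)) ⊔
          Submodule.comap (Adeg K k).subtype (N q) = ⊤ := by
        rw [eq_top_iff]
        intro x _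
        have hx : (x : FreeAlgebra K (Fin 2)) ∈ Vlt K V q * Vgt K V (k - q) ⊔ N q :=
          hdecomp q hq x.2
        obtain ⟨y, hy, z, hz, hyz⟩ := Submodule.mem_sup.mp hx
        rw [Submodule.mem_sup]
        exact ⟨⟨y, hWq hy⟩, hy, ⟨z, hNle q hq hz⟩, hz, Subtype.ext hyz⟩
      have hb1 : finrank K (↥(Adeg K k) ⧸ Submodule.comap (Adeg K k).subtype (N q)) ≤
          finrank K ↥(Submodule.comap (Adeg K k).subtype (Vlt K V q * Vgt K V (k - q))) :=
        finrank_quot_sup_top (by rwa [sup_comm] at htop)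
      have he : finrank K ↥(Submodule.comap (Adeg K k).subtype (Vlt K V q * Vgt K V (k - q)))
          = finrank K ↥(Vlt K V q * Vgt K V (k - q)) :=
        LinearEquiv.finrank_eq (Submodule.comapSubtypeEquivOfLe hWq)
      haveI := fd_of_le_Adeg (Vlt_le_Adeg V hVA q)
      haveI := fd_of_le_Adeg (Vgt_le_Adeg V hVA (k - q))
      exact le_trans hb1 (by rw [he]; exact finrank_mul_le _ _)
    calc finrank K (↥(Adeg K k) ⧸ Submodule.comap (Adeg K k).subtype (Edeg K U k))
        ≤ finrank K (↥(Adeg K k) ⧸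
            ⨅ q ∈ Finset.range (k + 1), Submodule.comap (Adeg K k).subtype (N q)) := hstep1
      _ ≤ ∑ q ∈ Finset.range (k + 1),
            finrank K (↥(Adeg K k) ⧸ Submodule.comap (Adeg K k).subtype (N q)) := hstep2
      _ ≤ ∑ q ∈ Finset.range (k + 1),
            finrank K ↥(Vlt K V q) * finrank K ↥(Vgt K V (k - q)) :=
          Finset.sum_le_sum hstep3
      _ = ∑ j ∈ Finset.range (k + 1),
            finrank K ↥(Vlt K V (k + 1 - 1 - j)) * finrank K ↥(Vgt K V (k - (k + 1 - 1 - j))) :=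
          (Finset.sum_range_reflect
            (fun q => finrank K ↥(Vlt K V q) * finrank K ↥(Vgt K V (k - q))) (k + 1)).symm
      _ = ∑ j ∈ Finset.range (k + 1),
            finrank K ↥(Vlt K V (k - j)) * finrank K ↥(Vgt K V j) := by
          apply Finset.sum_congr rfl
          intro j hj
          rw [Finset.mem_range] at hj
          rw [show k + 1 - 1 - j = k - j from by omega, show k - (k - j) = j from by omega]

end Final

/-- Proposition 1.1: `dim A(k)/E(k) ≤ Σ_{j=0}^{k} dim V^<(k-j) · dim V^>(j)`
(with `dim V^<(0) = dim V^>(0) = 1`, as `Vlt _ _ 0 = Vgt _ _ 0 = 1`). -/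
theorem stmt7 {K : Type*} [Field K]
    (U V : ℕ → Submodule K (FreeAlgebra K (Fin 2)))
    (hUA : ∀ m, U m ≤ Adeg K (2 ^ m)) (hVA : ∀ m, V m ≤ Adeg K (2 ^ m))
    (hV0 : V 0 = Adeg K 1) (hU0 : U 0 = ⊥)
    (hVmon : ∀ m, ∃ S : Set (FreeAlgebra K (Fin 2)),
      (∀ x ∈ S, IsMonomial K x) ∧ V m = Submodule.span K S)
    (hsum : ∀ m, V m ⊔ U m = Adeg K (2 ^ m)) (hint : ∀ m, V m ⊓ U m = ⊥)
    (habs : ∀ m, Adeg K (2 ^ m) * U m + U m * Adeg K (2 ^ m) ≤ U (m + 1))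
    (hVV : ∀ m, V (m + 1) ≤ V m * V m) :
    ∀ k : ℕ,
      Module.finrank K
          (↥(Adeg K k) ⧸ Submodule.comap (Adeg K k).subtype (Edeg K U k)) ≤
        ∑ j ∈ Finset.range (k + 1),
          Module.finrank K ↥(Vlt K V (k - j)) * Module.finrank K ↥(Vgt K V j) := by
  intro k
  exact stmt7' U V hUA hVA hsum habs k
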